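/- Let C be a nondegenerate closed class of B-decision tables and T ∈ C with cl(T) ≥ 2. Then N_C(R(T)) ≥ cl(T), where N_C(m) = max{N(T') : T' ∈ C, dim T' ≤ m} and R(T) is the minimum cardinality of a reduct for T. -/

import Mathlib

open scoped Classical

/-- A `B`-decision table: `dim` columns, rows are pairwise distinct tuples
from `B^dim` (a `Finset`), each row labeled by a decision `dec r : ℕ`. -/
structure Table (B : Type) [Fintype B] [DecidableEq B] where
  dim : ℕ
  rows : Finset (Fin dim → B)
  dec : (Fin dim → B) → ℕ

variable {B : Type} [Fintype B] [DecidableEq B]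

/-- number of rows N(T) -/
def Table.N (T : Table B) : ℕ := T.rows.card

/-- number of decision classes cl(T) -/
def Table.cl (T : Table B) : ℕ := (T.rows.image T.dec).card

/-- `T' ∈ [T]`: `T'` is obtained from `T` by removing columns (keeping an
order-preserving selection `φ` of columns), merging equal rows, and changing
decisions arbitrarily. -/
def SubTable (T T' : Table B) : Prop :=
  ∃ φ : Fin T'.dim → Fin T.dim, StrictMono φ ∧
    T'.rows = T.rows.image (fun r => r ∘ φ)

/-- closed class: C = ⋃_{T ∈ C} [T] -/
def IsClosedClass (C : Set (Table B)) : Prop :=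
  ∀ T ∈ C, ∀ T', SubTable T T' → T' ∈ C

/-- nondegenerate: number of rows of tables in C is unbounded -/
def Nondegenerate (C : Set (Table B)) : Prop :=
  ∀ m : ℕ, ∃ T ∈ C, m ≤ T.N

/-- a test: a set of columns separating any two rows with different decisions -/
def IsTest (T : Table B) (S : Finset (Fin T.dim)) : Prop :=
  ∀ r ∈ T.rows, ∀ r' ∈ T.rows, T.dec r ≠ T.dec r' → ∃ i ∈ S, r i ≠ r' i

/-- a reduct: a test no proper subset of which is a test -/
def IsReduct (T : Table B) (S : Finset (Fin T.dim)) : Prop :=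
  IsTest T S ∧ ∀ S' ⊂ S, ¬ IsTest T S'

/-- R(T): minimum cardinality of a reduct for T -/
noncomputable def R (T : Table B) : ℕ :=
  sInf {m | ∃ S : Finset (Fin T.dim), IsReduct T S ∧ S.card = m}

/-- quasicomplete: rows contain a product of two-element subsets of B -/
def Quasicomplete (T : Table B) : Prop :=
  ∃ Bs : Fin T.dim → Finset B, (∀ i, (Bs i).card = 2) ∧
    ∀ r : Fin T.dim → B, (∀ i, r i ∈ Bs i) → r ∈ T.rows

/-- I(T): maximum dimension of a quasicomplete table in [T] -/
noncomputable def Ival (T : Table B) : ℕ :=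
  sSup {d | ∃ T', SubTable T T' ∧ Quasicomplete T' ∧ T'.dim = d}

/-- N_C(n) = max { N(T) : T ∈ C, dim T ≤ n } -/
noncomputable def NC (C : Set (Table B)) (n : ℕ) : ℕ :=
  sSup {m | ∃ T ∈ C, T.dim ≤ n ∧ T.N = m}

lemma exists_reduct_card (T : Table B) :
    ∃ S : Finset (Fin T.dim), IsReduct T S ∧ S.card = R T := by
  have hfull : IsTest T Finset.univ := by
    intro r hr r' hr' hne
    have : r ≠ r' := fun h => hne (by rw [h])
    obtain ⟨i, hi⟩ := Function.ne_iff.mp this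
    exact ⟨i, Finset.mem_univ i, hi⟩
  set TS : Set ℕ := {k | ∃ S : Finset (Fin T.dim), IsTest T S ∧ S.card = k}
  have hne : TS.Nonempty := ⟨_, Finset.univ, hfull, rfl⟩
  obtain ⟨S, hS, hScard⟩ := Nat.sInf_mem hne
  have hred : IsReduct T S := by
    refine ⟨hS, fun S' hS' hS't => ?_⟩
    have h1 : sInf TS ≤ S'.card := Nat.sInf_le ⟨S', hS't, rfl⟩
    have h2 : S'.card < S.card := Finset.card_lt_card hS'
    omega
  have hRne : {m | ∃ S : Finset (Fin T.dim), IsReduct T S ∧ S.card = m}.Nonempty :=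
    ⟨S.card, S, hred, rfl⟩
  exact (Nat.sInf_mem hRne)

theorem stmt_9 (C : Set (Table B)) (hC : IsClosedClass C) (hnd : Nondegenerate C)
    (T : Table B) (hT : T ∈ C) (hcl : 2 ≤ T.cl) :
    T.cl ≤ NC C (R T) := by
  obtain ⟨S, ⟨hStest, _⟩, hScard⟩ := exists_reduct_card T
  set φ := S.orderEmbOfFin (rfl : S.card = S.card) with hφ
  set T' : Table B := ⟨S.card, T.rows.image (fun r => r ∘ φ), fun _ => 0⟩ with hT'
  have hsub : SubTable T T' := ⟨φ, (S.orderEmbOfFin rfl).strictMono, rfl⟩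
  have hT'C : T' ∈ C := hC T hT T' hsub
  -- cl T ≤ N T'
  have hclN : T.cl ≤ T'.N := by
    obtain ⟨d0, hd0⟩ := Finset.card_pos.mp (lt_of_lt_of_le (by norm_num) hcl)
    obtain ⟨r0, hr0, _⟩ := Finset.mem_image.mp hd0
    have hchoice : ∀ d ∈ T.rows.image T.dec, ∃ r ∈ T.rows, T.dec r = d := by
      intro d hd
      obtain ⟨r, hr, hrd⟩ := Finset.mem_image.mp hd
      exact ⟨r, hr, hrd⟩
    choose f hf hfd using hchoice
    have : T.cl ≤ T'.rows.card := by
      apply Finset.card_le_card_of_injOn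
        (fun d => if h : d ∈ T.rows.image T.dec then (f d h) ∘ φ else r0 ∘ φ)
      · intro d hd
        simp only [dif_pos hd, hT']
        exact Finset.mem_image.mpr ⟨f d hd, hf d hd, by rw [dif_pos (Finset.mem_coe.mp hd)]⟩
      · intro d hd d' hd' heq
        by_contra hne
        simp only [Finset.mem_coe] at hd hd'
        simp only [dif_pos hd, dif_pos hd'] at heq
        have hdec : T.dec (f d hd) ≠ T.dec (f d' hd') := by
          rw [hfd d hd, hfd d' hd']; exact hne
        obtain ⟨i, hiS, hir⟩ := hStest _ (hf d hd) _ (hf d' hd') hdec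
        obtain ⟨j, hj⟩ : ∃ j, φ j = i := by
          have : i ∈ Set.range φ := by
            rw [hφ, Finset.range_orderEmbOfFin]; exact hiS
          exact this
        exact hir (by have := congrFun heq j; simpa [hj] using this)
    exact this
  -- N T' is in the NC set and bounded
  have hmem : T'.N ∈ {m | ∃ Ta ∈ C, Ta.dim ≤ R T ∧ Ta.N = m} :=
    ⟨T', hT'C, by simp [hT', hScard], rfl⟩
  have hbdd : BddAbove {m | ∃ Ta ∈ C, Ta.dim ≤ R T ∧ Ta.N = m} := by
    refine ⟨(Fintype.card B + 1) ^ (R T), fun m hm => ?_⟩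
    obtain ⟨Ta, _, hdim, hN⟩ := hm
    calc m = Ta.rows.card := hN.symm
      _ ≤ Fintype.card (Fin Ta.dim → B) := Finset.card_le_univ _
      _ = Fintype.card B ^ Ta.dim := by simp [Fintype.card_fun]
      _ ≤ (Fintype.card B + 1) ^ Ta.dim := Nat.pow_le_pow_left (Nat.le_succ _) _
      _ ≤ (Fintype.card B + 1) ^ (R T) := Nat.pow_le_pow_right (Nat.succ_le_succ (Nat.zero_le _)) hdim
  exact le_trans hclN (le_csSup hbdd hmem)
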